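/- Let A ∈ R^{n×d} have pairwise orthogonal columns a₁,…,a_d sorted so that ‖a_i‖₂ ≥ ‖a_{i+1}‖₂ for all i. Partition the columns into consecutive blocks of size k (padding with zero columns if necessary), letting A'₁,…,A'_q denote the blocks and s_i = ‖A'_i‖ the operator norm of the i-th block. Then Σ_i s_i² ≤ ‖A‖² + ‖A‖_F²/k. -/

import Mathlib

open Matrix MeasureTheory

noncomputable def opNorm {α β : Type} [Fintype α] [Fintype β] [DecidableEq β]
    (A : Matrix α β ℝ) : ℝ :=
  ‖LinearMap.toContinuousLinearMap (Matrix.toEuclideanLin A)‖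

noncomputable def frobNorm {α β : Type} [Fintype α] [Fintype β] (A : Matrix α β ℝ) : ℝ :=
  Real.sqrt (∑ i, ∑ j, A i j ^ 2)

/-- The `i`-th block of `k` consecutive columns of `A`. -/
def colBlock {n q k : ℕ} (A : Matrix (Fin n) (Fin (q * k)) ℝ) (i : Fin q) :
    Matrix (Fin n) (Fin k) ℝ :=
  Matrix.of fun r c => A r ⟨i.1 * k + c.1, by
    have h1 : i.1 * k + c.1 < (i.1 + 1) * k := by nlinarith [c.2]
    have h2 : (i.1 + 1) * k ≤ q * k := Nat.mul_le_mul_right k i.2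
    omega⟩

lemma euclid_norm_sq {n : ℕ} (y : EuclideanSpace ℝ (Fin n)) :
    ‖y‖ ^ 2 = ∑ r, (y r) ^ 2 := by
  rw [EuclideanSpace.norm_eq, Real.sq_sqrt (by positivity)]
  simp [sq_abs]

lemma apply_toEuclideanLin {n m : ℕ} (B : Matrix (Fin n) (Fin m) ℝ)
    (x : EuclideanSpace ℝ (Fin m)) (r : Fin n) :
    (Matrix.toEuclideanLin B x) r = ∑ c, B r c * x c := by
  simp [Matrix.toEuclideanLin_apply, Matrix.mulVec, dotProduct]

/-- Each squared column norm is at most the squared operator norm. -/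
lemma col_sq_le_opNorm_sq {n m : ℕ} (B : Matrix (Fin n) (Fin m) ℝ) (j : Fin m) :
    (∑ r, B r j ^ 2) ≤ opNorm B ^ 2 := by
  set L := LinearMap.toContinuousLinearMap (Matrix.toEuclideanLin B) with hL
  set x : EuclideanSpace ℝ (Fin m) := EuclideanSpace.single j 1 with hx
  have hxn : ‖x‖ = 1 := by simp [hx]
  have h1 : ‖L x‖ ≤ ‖L‖ := by
    calc ‖L x‖ ≤ ‖L‖ * ‖x‖ := L.le_opNorm x
    _ = ‖L‖ := by rw [hxn, mul_one]
  have h2 : ‖L x‖ ^ 2 = ∑ r, B r j ^ 2 := by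
    rw [euclid_norm_sq]
    refine Finset.sum_congr rfl fun r _ => ?_
    have : (L x) r = ∑ c, B r c * x c := apply_toEuclideanLin B x r
    rw [this]
    have : ∑ c, B r c * x c = B r j := by
      rw [Finset.sum_eq_single j]
      · simp [hx, EuclideanSpace.single_apply]
      · intro b _ hb
        simp [hx, EuclideanSpace.single_apply, hb]
      · simp
    rw [this]
  rw [← h2]
  exact pow_le_pow_left₀ (norm_nonneg _) h1 2

/-- For a matrix with pairwise orthogonal columns, the squared operator norm
is bounded by any common bound on the squared column norms. -/
lemma opNorm_sq_le {n m : ℕ} (B : Matrix (Fin n) (Fin m) ℝ)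
    (horth : ∀ c c' : Fin m, c ≠ c' → (∑ r, B r c * B r c') = 0)
    (M : ℝ) (hM : 0 ≤ M) (hcol : ∀ c, (∑ r, B r c ^ 2) ≤ M) :
    opNorm B ^ 2 ≤ M := by
  have key : opNorm B ≤ Real.sqrt M := by
    apply ContinuousLinearMap.opNorm_le_bound _ (Real.sqrt_nonneg M)
    intro x
    have hsq : ‖(LinearMap.toContinuousLinearMap (Matrix.toEuclideanLin B)) x‖ ^ 2
        ≤ M * ‖x‖ ^ 2 := by
      rw [euclid_norm_sq]
      have hcalc : ∑ r, ((LinearMap.toContinuousLinearMap (Matrix.toEuclideanLin B)) x r) ^ 2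
          = ∑ c, (∑ r, B r c ^ 2) * x c ^ 2 := by
        have e1 : ∀ r, ((LinearMap.toContinuousLinearMap (Matrix.toEuclideanLin B)) x r)
            = ∑ c, B r c * x c := fun r => apply_toEuclideanLin B x r
        calc ∑ r, ((LinearMap.toContinuousLinearMap (Matrix.toEuclideanLin B)) x r) ^ 2
            = ∑ r, (∑ c, B r c * x c) * (∑ c', B r c' * x c') := by
              refine Finset.sum_congr rfl fun r _ => ?_; rw [e1 r, sq]
          _ = ∑ r, ∑ c, ∑ c', (B r c * B r c') * (x c * x c') := by
              refine Finset.sum_congr rfl fun r _ => ?_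
              rw [Finset.sum_mul_sum]
              exact Finset.sum_congr rfl fun c _ => Finset.sum_congr rfl fun c' _ => by ring
          _ = ∑ c, ∑ c', (∑ r, B r c * B r c') * (x c * x c') := by
              rw [Finset.sum_comm]
              refine Finset.sum_congr rfl fun c _ => ?_
              rw [Finset.sum_comm]
              refine Finset.sum_congr rfl fun c' _ => ?_
              rw [Finset.sum_mul]
          _ = ∑ c, (∑ r, B r c ^ 2) * x c ^ 2 := by
              refine Finset.sum_congr rfl fun c _ => ?_
              rw [Finset.sum_eq_single c]
              · congr 1
                · exact Finset.sum_congr rfl fun r _ => (sq (B r c)).symm ▸ by ring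
                · ring
              · intro c' _ hc'
                rw [horth c c' (Ne.symm hc'), zero_mul]
              · simp
      rw [hcalc, euclid_norm_sq, Finset.mul_sum]
      refine Finset.sum_le_sum fun c _ => ?_
      exact mul_le_mul_of_nonneg_right (hcol c) (sq_nonneg _)
    calc ‖(LinearMap.toContinuousLinearMap (Matrix.toEuclideanLin B)) x‖
        = Real.sqrt (‖(LinearMap.toContinuousLinearMap (Matrix.toEuclideanLin B)) x‖ ^ 2) := by
          rw [Real.sqrt_sq (norm_nonneg _)]
      _ ≤ Real.sqrt (M * ‖x‖ ^ 2) := Real.sqrt_le_sqrt hsq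
      _ = Real.sqrt M * ‖x‖ := by
          rw [Real.sqrt_mul hM, Real.sqrt_sq (norm_nonneg _)]
  have h0 : 0 ≤ opNorm B := norm_nonneg _
  calc opNorm B ^ 2 ≤ Real.sqrt M ^ 2 := pow_le_pow_left₀ h0 key 2
    _ = M := Real.sq_sqrt hM

theorem stmt2 {n q k : ℕ} (hk : 0 < k) (A : Matrix (Fin n) (Fin (q * k)) ℝ)
    (horth : ∀ i j : Fin (q * k), i ≠ j → (∑ r, A r i * A r j) = 0)
    (hsort : ∀ i j : Fin (q * k), i ≤ j → (∑ r, A r j ^ 2) ≤ ∑ r, A r i ^ 2) :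
    ∑ i : Fin q, opNorm (colBlock A i) ^ 2 ≤ opNorm A ^ 2 + frobNorm A ^ 2 / k := by
  set N : Fin (q * k) → ℝ := fun j => ∑ r, A r j ^ 2 with hN
  have hNnonneg : ∀ j, 0 ≤ N j := fun j => Finset.sum_nonneg fun r _ => sq_nonneg _
  have hFrob : frobNorm A ^ 2 = ∑ j, N j := by
    rw [frobNorm, Real.sq_sqrt (by positivity)]
    exact Finset.sum_comm
  -- index embedding
  have hemb : ∀ (i : Fin q) (c : Fin k), i.1 * k + c.1 < q * k := by
    intro i c
    have h1 : i.1 * k + c.1 < (i.1 + 1) * k := by nlinarith [c.2]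
    have h2 : (i.1 + 1) * k ≤ q * k := Nat.mul_le_mul_right k i.2
    omega
  -- each block
  have hblock : ∀ i : Fin q, opNorm (colBlock A i) ^ 2 ≤ N ⟨i.1 * k, hemb i ⟨0, hk⟩⟩ := by
    intro i
    apply opNorm_sq_le
    · intro c c' hcc
      apply horth
      simp only [ne_eq, Fin.mk.injEq]
      intro h
      exact hcc (Fin.ext (by omega))
    · exact hNnonneg _
    · intro c
      have : (∑ r, (colBlock A i) r c ^ 2) = N ⟨i.1 * k + c.1, hemb i c⟩ := rfl
      rw [this]
      exact hsort _ _ (by simp [Fin.le_def])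
  have hstep : ∑ i : Fin q, opNorm (colBlock A i) ^ 2
      ≤ ∑ i : Fin q, N ⟨i.1 * k, hemb i ⟨0, hk⟩⟩ :=
    Finset.sum_le_sum fun i _ => hblock i
  rcases Nat.eq_zero_or_pos q with hq | hq
  · subst hq
    simp only [Finset.univ_eq_empty, Finset.sum_empty] at hstep ⊢
    have : (0:ℝ) ≤ opNorm A ^ 2 + frobNorm A ^ 2 / k := by positivity
    linarith
  · obtain ⟨q', rfl⟩ : ∃ q', q = q' + 1 := ⟨q - 1, by omega⟩
    have hbound : ∀ (i : Fin q') (c : Fin k), (i.1 + 1) * k ≤ (q' + 1) * k ∧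
        i.1 * k + c.1 < (q' + 1) * k := by
      intro i c
      constructor
      · exact Nat.mul_le_mul_right k (by omega)
      · have := hemb ⟨i.1, by omega⟩ c
        exact this
    have hk' : ((q' + 1) * k) > 0 := by positivity
    -- first term bounded by operator norm
    have hfirst : N ⟨(0 : Fin (q' + 1)).1 * k, hemb 0 ⟨0, hk⟩⟩ ≤ opNorm A ^ 2 :=
      col_sq_le_opNorm_sq A _
    -- tail terms
    have htail : ∀ i : Fin q',
        (k : ℝ) * N ⟨((Fin.succ i).1) * k, hemb i.succ ⟨0, hk⟩⟩
          ≤ ∑ c : Fin k, N ⟨i.1 * k + c.1, (hbound i c).2⟩ := by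
      intro i
      have : (k : ℝ) * N ⟨((Fin.succ i).1) * k, hemb i.succ ⟨0, hk⟩⟩
          = ∑ _c : Fin k, N ⟨((Fin.succ i).1) * k, hemb i.succ ⟨0, hk⟩⟩ := by
        rw [Finset.sum_const, Finset.card_univ, Fintype.card_fin, nsmul_eq_mul]
      rw [this]
      refine Finset.sum_le_sum fun c _ => ?_
      apply hsort
      simp only [Fin.le_def, Fin.succ]
      have : i.1 * k + c.1 < (i.1 + 1) * k := by nlinarith [c.2]
      omega
    have hsumtail : ∑ i : Fin q', ∑ c : Fin k, N ⟨i.1 * k + c.1, (hbound i c).2⟩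
        ≤ ∑ j, N j := by
      have e1 : ∑ j, N j = ∑ i : Fin (q' + 1), ∑ c : Fin k, N (finProdFinEquiv (i, c)) := by
        rw [← Equiv.sum_comp finProdFinEquiv N, Fintype.sum_prod_type]
      have e2 : ∀ (i : Fin q') (c : Fin k),
          N ⟨i.1 * k + c.1, (hbound i c).2⟩ = N (finProdFinEquiv (i.castSucc, c)) := by
        intro i c
        congr 1
        apply Fin.ext
        show i.1 * k + c.1 = c.1 + k * (i.castSucc).1
        simp [Fin.castSucc]
        ring
      calc ∑ i : Fin q', ∑ c : Fin k, N ⟨i.1 * k + c.1, (hbound i c).2⟩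
          = ∑ i : Fin q', ∑ c : Fin k, N (finProdFinEquiv (i.castSucc, c)) := by
            exact Finset.sum_congr rfl fun i _ => Finset.sum_congr rfl fun c _ => e2 i c
        _ ≤ ∑ i : Fin (q' + 1), ∑ c : Fin k, N (finProdFinEquiv (i, c)) := by
            rw [Fin.sum_univ_castSucc]
            have : 0 ≤ ∑ c : Fin k, N (finProdFinEquiv (Fin.last q', c)) :=
              Finset.sum_nonneg fun c _ => hNnonneg _
            linarith
        _ = ∑ j, N j := e1.symm
    have hT : (k : ℝ) * ∑ i : Fin q', N ⟨((Fin.succ i).1) * k, hemb i.succ ⟨0, hk⟩⟩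
        ≤ ∑ j, N j := by
      rw [Finset.mul_sum]
      exact le_trans (Finset.sum_le_sum fun i _ => htail i) hsumtail
    have hkR : (0 : ℝ) < k := by exact_mod_cast hk
    have hTdiv : ∑ i : Fin q', N ⟨((Fin.succ i).1) * k, hemb i.succ ⟨0, hk⟩⟩
        ≤ (∑ j, N j) / k := (le_div_iff₀ hkR).mpr (by linarith [hT])
    rw [hFrob]
    calc ∑ i : Fin (q' + 1), opNorm (colBlock A i) ^ 2
        ≤ ∑ i : Fin (q' + 1), N ⟨i.1 * k, hemb i ⟨0, hk⟩⟩ := hstep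
      _ = N ⟨(0 : Fin (q' + 1)).1 * k, hemb 0 ⟨0, hk⟩⟩
          + ∑ i : Fin q', N ⟨((Fin.succ i).1) * k, hemb i.succ ⟨0, hk⟩⟩ :=
          Fin.sum_univ_succ _
      _ ≤ opNorm A ^ 2 + (∑ j, N j) / k := add_le_add hfirst hTdiv
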